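/- (Xiao's key lemma) Let f : S → B be a fibred surface with general fibre F and let D be a divisor on S. Suppose there exist effective divisors Z₁ ≥ Z₂ ≥ … ≥ Z_s ≥ Z_{s+1} := 0 and rational numbers μ₁ > μ₂ > … > μ_s ≥ μ_{s+1} := 0 such that for every i = 1, …, s+1 the ℚ-divisor N_i := D − Z_i − μ_i F is nef. Then for any subset of indices {j₁ < j₂ < … < j_t} ⊆ {1, …, s}, setting j_{t+1} := s+1 and d_j := N_j · F, one has D² ≥ Σ_{i=1}^{t} (d_{j_i} + d_{j_{i+1}})(μ_{j_i} − μ_{j_{i+1}}). -/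
import Mathlib


open scoped BigOperators

/-- An abstract model of the intersection theory of a smooth projective surface `S`
over `ℂ` fibred over a curve: the group of (real) divisor classes with its
intersection pairing, together with the nef and effective cones.  A (ℚ- or ℝ-)
divisor `N` is nef if `N·C ≥ 0` for every curve `C`; in particular the intersection
of a nef divisor with an effective (or nef) divisor is non-negative. -/
structure SurfaceIntersection where
  /-- (real) divisor classes on the surface -/
  Div : Type
  [divAddCommGroup : AddCommGroup Div]
  [divModule : Module ℝ Div]
  /-- the intersection pairing -/
  inter : Div → Div → ℝ
  inter_symm : ∀ X Y : Div, inter X Y = inter Y X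
  inter_add_left : ∀ X Y Z : Div, inter (X + Y) Z = inter X Z + inter Y Z
  inter_smul_left : ∀ (c : ℝ) (X Y : Div), inter (c • X) Y = c * inter X Y
  /-- nef divisor classes -/
  Nef : Div → Prop
  /-- effective divisor classes -/
  Eff : Div → Prop
  nef_inter_eff_nonneg : ∀ {N Z : Div}, Nef N → Eff Z → 0 ≤ inter N Z
  nef_inter_nef_nonneg : ∀ {N N' : Div}, Nef N → Nef N' → 0 ≤ inter N N'
  eff_add : ∀ {Z Z' : Div}, Eff Z → Eff Z' → Eff (Z + Z')

attribute [instance] SurfaceIntersection.divAddCommGroup SurfaceIntersection.divModule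

namespace SurfaceIntersection

variable (S : SurfaceIntersection)

lemma inter_neg_left (X Y : S.Div) : S.inter (-X) Y = - S.inter X Y := by
  have := S.inter_smul_left (-1) X Y
  simpa using this

lemma inter_sub_left (X Y W : S.Div) :
    S.inter (X - Y) W = S.inter X W - S.inter Y W := by
  rw [sub_eq_add_neg, S.inter_add_left, S.inter_neg_left, sub_eq_add_neg]

lemma inter_add_right (X Y W : S.Div) :
    S.inter X (Y + W) = S.inter X Y + S.inter X W := by
  rw [S.inter_symm, S.inter_add_left, S.inter_symm Y, S.inter_symm W]

lemma inter_sub_right (X Y W : S.Div) :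
    S.inter X (Y - W) = S.inter X Y - S.inter X W := by
  rw [S.inter_symm, S.inter_sub_left, S.inter_symm Y, S.inter_symm W]

lemma inter_smul_right (c : ℝ) (X Y : S.Div) :
    S.inter X (c • Y) = c * S.inter X Y := by
  rw [S.inter_symm, S.inter_smul_left, S.inter_symm]

lemma xiao_step (F : S.Div) (Na Nb E : S.Div) (c : ℝ)
    (hNa : S.Nef Na) (hNb : S.Nef Nb) (hE : S.Eff E)
    (hdiff : Nb - Na = E + c • F) :
    (S.inter Na F + S.inter Nb F) * c ≤ S.inter Nb Nb - S.inter Na Na := by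
  have h1 : S.inter Nb Nb - S.inter Na Na = S.inter (Nb + Na) (Nb - Na) := by
    rw [S.inter_add_left, S.inter_sub_right, S.inter_sub_right, S.inter_symm Na Nb]
    ring
  have h2 : S.inter (Nb + Na) (Nb - Na)
      = S.inter (Nb + Na) E + c * S.inter (Nb + Na) F := by
    rw [hdiff, S.inter_add_right, S.inter_smul_right]
  have h3 : 0 ≤ S.inter (Nb + Na) E := by
    rw [S.inter_add_left]
    have := S.nef_inter_eff_nonneg hNb hE
    have := S.nef_inter_eff_nonneg hNa hE
    linarith
  have h4 : S.inter (Nb + Na) F = S.inter Nb F + S.inter Na F := S.inter_add_left _ _ _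
  rw [h1, h2, h4]
  nlinarith [h3]

end SurfaceIntersection

/-- **Xiao's key lemma.**  Let `f : S → B` be a fibred surface with general fibre `F`
(so `F` is nef and `F² = 0`) and let `D` be a divisor on `S`.  Suppose there are
effective divisors `Z₁ ≥ Z₂ ≥ ⋯ ≥ Z_s ≥ Z_{s+1} := 0` (i.e. each `Z_i − Z_{i+1}` is
effective) and rational numbers `μ₁ > μ₂ > ⋯ > μ_s ≥ μ_{s+1} := 0` such that for
every `i = 1, …, s+1` the ℚ-divisor `N_i := D − Z_i − μ_i F` is nef.  Then for any
subset of indices `{j₁ < j₂ < ⋯ < j_t} ⊆ {1, …, s}`, setting `j_{t+1} := s+1` and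
`d_j := N_j·F`, one has `D² ≥ Σ_{i=1}^{t} (d_{j_i} + d_{j_{i+1}})(μ_{j_i} − μ_{j_{i+1}})`. -/
theorem xiao_key_lemma (S : SurfaceIntersection) (D F : S.Div)
    (hF_nef : S.Nef F) (hF_sq : S.inter F F = 0)
    (s : ℕ) (hs : 1 ≤ s)
    (Z : ℕ → S.Div) (μ : ℕ → ℚ)
    (hZ_eff : ∀ i, 1 ≤ i → i ≤ s → S.Eff (Z i))
    (hZ_antitone : ∀ i, 1 ≤ i → i ≤ s → S.Eff (Z i - Z (i + 1)))
    (hZ_last : Z (s + 1) = 0)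
    (hμ_strictAnti : ∀ i, 1 ≤ i → i < s → μ (i + 1) < μ i)
    (hμ_s_nonneg : 0 ≤ μ s) (hμ_last : μ (s + 1) = 0)
    (hN_nef : ∀ i, 1 ≤ i → i ≤ s + 1 → S.Nef (D - Z i - (μ i : ℝ) • F))
    (t : ℕ) (ht : 1 ≤ t) (j : ℕ → ℕ)
    (hj_strictMono : ∀ i, 1 ≤ i → i < t → j i < j (i + 1))
    (hj_range : ∀ i, 1 ≤ i → i ≤ t → 1 ≤ j i ∧ j i ≤ s)
    (hj_last : j (t + 1) = s + 1) :
    ∑ i ∈ Finset.Icc 1 t,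
        (S.inter (D - Z (j i) - (μ (j i) : ℝ) • F) F +
            S.inter (D - Z (j (i + 1)) - (μ (j (i + 1)) : ℝ) • F) F) *
          ((μ (j i) : ℝ) - (μ (j (i + 1)) : ℝ)) ≤
      S.inter D D := by

  have eff_diff : ∀ b a, 1 ≤ a → a < b → b ≤ s + 1 → S.Eff (Z a - Z b) := by
    intro b
    induction b with
    | zero => intro a ha hab hb; omega
    | succ b ih =>
      intro a ha hab hb
      rcases Nat.lt_succ_iff_lt_or_eq.mp hab with h | h
      · have h1 : S.Eff (Z a - Z b) := ih a ha h (by omega)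
        have h2 : S.Eff (Z b - Z (b + 1)) := hZ_antitone b (by omega) (by omega)
        have h3 := S.eff_add h1 h2
        rwa [sub_add_sub_cancel] at h3
      · subst h
        exact hZ_antitone a ha (by omega)
  have hjmono : ∀ i, 1 ≤ i → i ≤ t → j i < j (i + 1) := by
    intro i hi hit
    rcases eq_or_lt_of_le hit with h | h
    · subst h
      have := (hj_range i hi le_rfl).2
      omega
    · exact hj_strictMono i hi h
  have hjrange' : ∀ i, 1 ≤ i → i ≤ t + 1 → 1 ≤ j i ∧ j i ≤ s + 1 := by
    intro i hi hit
    by_cases h : i ≤ t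
    · have := hj_range i hi h
      omega
    · have hit' : i = t + 1 := by omega
      subst hit'
      omega
  set g : ℕ → ℝ := fun i =>
    S.inter (D - Z (j i) - (μ (j i) : ℝ) • F) (D - Z (j i) - (μ (j i) : ℝ) • F) with hg
  have key : ∀ i ∈ Finset.Icc 1 t,
      (S.inter (D - Z (j i) - (μ (j i) : ℝ) • F) F +
          S.inter (D - Z (j (i + 1)) - (μ (j (i + 1)) : ℝ) • F) F) *
        ((μ (j i) : ℝ) - (μ (j (i + 1)) : ℝ)) ≤ g (i + 1) - g i := by
    intro i hi
    simp only [Finset.mem_Icc] at hi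
    obtain ⟨h1, h2⟩ := hi
    have ha := hjrange' i h1 (by omega)
    have hb := hjrange' (i + 1) (by omega) (by omega)
    refine S.xiao_step F _ _ (Z (j i) - Z (j (i + 1))) _
      (hN_nef _ ha.1 ha.2) (hN_nef _ hb.1 hb.2)
      (eff_diff _ _ ha.1 (hjmono i h1 h2) hb.2) ?_
    rw [sub_smul]
    abel
  have tel : ∀ n : ℕ, ∑ i ∈ Finset.Icc 1 n, (g (i + 1) - g i) = g (n + 1) - g 1 := by
    intro n
    induction n with
    | zero => simp
    | succ n ih =>
      rw [Finset.sum_Icc_succ_top (by omega), ih]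
      ring
  have hgt : g (t + 1) = S.inter D D := by
    have hμ0 : (μ (s + 1) : ℝ) = 0 := by rw [hμ_last]; norm_num
    simp [hg, hj_last, hZ_last, hμ0]
  have hg1 : 0 ≤ g 1 := by
    have hr := hjrange' 1 le_rfl (by omega)
    exact S.nef_inter_nef_nonneg (hN_nef _ hr.1 hr.2) (hN_nef _ hr.1 hr.2)
  calc ∑ i ∈ Finset.Icc 1 t,
        (S.inter (D - Z (j i) - (μ (j i) : ℝ) • F) F +
            S.inter (D - Z (j (i + 1)) - (μ (j (i + 1)) : ℝ) • F) F) *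
          ((μ (j i) : ℝ) - (μ (j (i + 1)) : ℝ))
      ≤ ∑ i ∈ Finset.Icc 1 t, (g (i + 1) - g i) := Finset.sum_le_sum key
    _ = g (t + 1) - g 1 := tel t
    _ ≤ S.inter D D := by rw [hgt]; linarith
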